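/- arXiv:2211.00334 — 4 statements merged into one kernel-verified Lean document; each statement's English description precedes it below -/
import Mathlib

section
/- Let A be a finite-dimensional commutative algebra over a field F, V an F-vector space, θ : A × A → V a bilinear map, x ∈ A with L_x diagonalizable, and v ∈ V. If the kernel of L_x is contained in { y ∈ A : θ(x,y) = 0 }, then the left multiplication operator by x+v on A_θ is diagonalizable. -/
/-- if `L_x` is diagonalisable and `ker L_x ⊆ θ_x^⊥`, then left
multiplication by `x + v` on the central extension `A_θ` is diagonalisable. -/
theorem stmt_4 {F A V : Type*} [Field F] [AddCommGroup A] [Module F A]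
    [FiniteDimensional F A] [AddCommGroup V] [Module F V]
    (mul : A →ₗ[F] A →ₗ[F] A) (hcomm : ∀ x y : A, mul x y = mul y x)
    (θ : A →ₗ[F] A →ₗ[F] V) (x : A) (v : V)
    (hdiag : (⨆ μ : F, Module.End.eigenspace (mul x) μ) = ⊤)
    (hker : ∀ y : A, mul x y = 0 → θ x y = 0) :
    (⨆ μ : F, Module.End.eigenspace
        (((mul x).comp (LinearMap.fst F A V)).prod
          ((θ x).comp (LinearMap.fst F A V))) μ) = ⊤ := by
  set T := (((mul x).comp (LinearMap.fst F A V)).prod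
      ((θ x).comp (LinearMap.fst F A V))) with hT
  set S := ⨆ μ : F, Module.End.eigenspace T μ with hS
  have hV : ∀ w : V, ((0 : A), w) ∈ S := by
    intro w
    refine le_iSup (fun μ => Module.End.eigenspace T μ) 0 ?_
    rw [Module.End.mem_eigenspace_iff]
    simp [hT, Prod.ext_iff]
  have hA : ∀ a : A, ((a, (0 : V)) : A × V) ∈ S := by
    intro a
    have ha : a ∈ ⨆ μ : F, Module.End.eigenspace (mul x) μ := hdiag ▸ Submodule.mem_top
    induction ha using Submodule.iSup_induction' with
    | mem μ a ha =>
      rcases eq_or_ne μ 0 with rfl | hμ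
      · refine le_iSup (fun μ => Module.End.eigenspace T μ) 0 ?_
        rw [Module.End.mem_eigenspace_iff] at ha ⊢
        rw [zero_smul] at ha
        have h0 := hker a ha
        simp [hT, Prod.ext_iff, ha, h0]
      · have h1 : ((a, μ⁻¹ • θ x a) : A × V) ∈ S := by
          refine le_iSup (fun μ => Module.End.eigenspace T μ) μ ?_
          rw [Module.End.mem_eigenspace_iff] at ha ⊢
          simp [hT, Prod.ext_iff, ha, smul_smul, mul_inv_cancel₀ hμ]
        have h2 := hV (μ⁻¹ • θ x a)
        have h3 := S.sub_mem h1 h2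
        simpa using h3
    | zero => exact S.zero_mem
    | add a b _ _ pa pb =>
      have h3 := S.add_mem pa pb
      simpa using h3
  rw [eq_top_iff]
  rintro ⟨a, w⟩ _
  have h4 : ((a, w) : A × V) = (a, (0 : V)) + ((0 : A), w) := by simp
  rw [h4]
  exact S.add_mem (hA a) (hV w)
end

section
/- Let A be a finite-dimensional commutative algebra over a field F, V a finite-dimensional F-vector space, θ : A × A → V a bilinear map, x ∈ A and v ∈ V. If the left multiplication operator by x+v on A_θ is diagonalizable, then L_x is diagonalizable and ker L_x ⊆ { y ∈ A : θ(x,y) = 0 }. -/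
/-- if left multiplication by `x + v` on the central extension `A_θ`
is diagonalisable, then `L_x` is diagonalisable and `ker L_x ⊆ θ_x^⊥`. -/
theorem stmt_5 {F A V : Type*} [Field F] [AddCommGroup A] [Module F A]
    [FiniteDimensional F A] [AddCommGroup V] [Module F V] [FiniteDimensional F V]
    (mul : A →ₗ[F] A →ₗ[F] A) (hcomm : ∀ x y : A, mul x y = mul y x)
    (θ : A →ₗ[F] A →ₗ[F] V) (x : A) (v : V)
    (hdiag : (⨆ μ : F, Module.End.eigenspace
        (((mul x).comp (LinearMap.fst F A V)).prod
          ((θ x).comp (LinearMap.fst F A V))) μ) = ⊤) :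
    (⨆ μ : F, Module.End.eigenspace (mul x) μ) = ⊤ ∧
      ∀ y : A, mul x y = 0 → θ x y = 0 := by
  set T : Module.End F (A × V) :=
    ((mul x).comp (LinearMap.fst F A V)).prod ((θ x).comp (LinearMap.fst F A V)) with hT
  constructor
  · -- Part 1: L_x is diagonalisable
    have h1 : ∀ μ : F, (Module.End.eigenspace T μ).map (LinearMap.fst F A V)
        ≤ Module.End.eigenspace (mul x) μ := by
      rintro μ _ ⟨⟨a, w⟩, ha, rfl⟩
      rw [SetLike.mem_coe, Module.End.mem_eigenspace_iff] at ha
      rw [Module.End.mem_eigenspace_iff]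
      have := congrArg Prod.fst ha
      simpa [hT] using this
    have hsurj : Function.Surjective (LinearMap.fst F A V) := Prod.fst_surjective
    have htop : (⊤ : Submodule F (A × V)).map (LinearMap.fst F A V) = ⊤ := by
      rw [Submodule.map_top]
      exact LinearMap.range_eq_top.mpr hsurj
    rw [← top_le_iff, ← htop, ← hdiag, Submodule.map_iSup (f := LinearMap.fst F A V)]
    exact iSup_mono h1
  · -- Part 2: ker L_x ⊆ ker θ_x
    intro y hy
    have hTy : T (y, 0) = ((0 : A), θ x y) := by simp [hT, hy]
    have h0 : ((0 : A), θ x y) ∈ Module.End.eigenspace T (0 : F) := by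
      rw [Module.End.mem_eigenspace_iff]
      simp [hT]
    have hmem : ((0 : A), θ x y) ∈ ⨆ μ : F, ⨆ _ : μ ≠ 0, Module.End.eigenspace T μ := by
      have hy' : (y, (0 : V)) ∈ ⨆ μ : F, Module.End.eigenspace T μ := by
        rw [hdiag]; trivial
      obtain ⟨f, hf, hsum⟩ := (Submodule.mem_iSup_iff_exists_finsupp _ _).mp hy'
      have : ((0 : A), θ x y) = f.sum fun μ u => μ • u := by
        rw [← hTy, ← hsum, Finsupp.sum, Finsupp.sum, map_sum]
        refine Finset.sum_congr rfl fun μ _ => ?_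
        exact Module.End.mem_eigenspace_iff.mp (hf μ)
      rw [this]
      refine Submodule.sum_mem _ fun μ _ => ?_
      rcases eq_or_ne μ 0 with rfl | hμ
      · simp
      · exact Submodule.mem_iSup_of_mem μ (Submodule.mem_iSup_of_mem hμ
          (Submodule.smul_mem _ _ (hf μ)))
    have hdisj := T.eigenspaces_iSupIndep (0 : F)
    have := Submodule.disjoint_def.mp hdisj _ h0 hmem
    exact (Prod.mk.injEq _ _ _ _).mp this |>.2
end

section
/- Let F be a field of characteristic not 2 and let J_n be the (n ≥ 1)-dimensional commutative algebra with basis {e, n_1, …, n_{n−1}} and products e·e = e, e·n_i = (1/2) n_i, n_i·n_j = 0. Then every symmetric bilinear map θ : J_n × J_n → V into a vector space V is a Jordan 2-cocycle, i.e., θ(xy, x²) = θ(x, y x²) for all x, y ∈ J_n; consequently every commutative central extension (J_n)_θ is a Jordan algebra. -/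
/-- The Jordan algebra `J_{n+1}` on basis `e = δ_0, n_1, …, n_n`:
`e² = e`, `e nᵢ = ½ nᵢ`, `nᵢ nⱼ = 0`. -/
def Jmul {F : Type*} [Field F] (n : ℕ) (x y : Fin (n + 1) → F) :
    Fin (n + 1) → F :=
  fun i => if i = 0 then x 0 * y 0 else (2 : F)⁻¹ * (x 0 * y i + x i * y 0)

lemma Jmul_eq {F : Type*} [Field F] (hchar : (2 : F) ≠ 0) (n : ℕ)
    (x y : Fin (n + 1) → F) :
    Jmul n x y = ((2 : F)⁻¹ * x 0) • y + ((2 : F)⁻¹ * y 0) • x := by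
  funext i
  by_cases h : i = 0 <;>
    simp only [Jmul, h, if_pos, if_neg, if_false, Pi.add_apply, Pi.smul_apply, smul_eq_mul] <;>
    field_simp <;> ring

/-- over a field of characteristic not 2, every symmetric
bilinear map `θ : J_n × J_n → V` is a Jordan 2-cocycle, so every commutative
central extension `(J_n)_θ` is a Jordan algebra. -/
theorem stmt_15 {F V : Type*} [Field F] [AddCommGroup V] [Module F V]
    (hchar : (2 : F) ≠ 0) (n : ℕ)
    (θ : (Fin (n + 1) → F) →ₗ[F] (Fin (n + 1) → F) →ₗ[F] V)
    (hsymm : ∀ x y : Fin (n + 1) → F, θ x y = θ y x) :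
    (∀ x y : Fin (n + 1) → F,
      θ (Jmul n x y) (Jmul n x x) = θ x (Jmul n y (Jmul n x x))) ∧
    (∀ p q : (Fin (n + 1) → F) × V,
      ((Jmul n (Jmul n p.1 q.1) (Jmul n p.1 p.1),
        θ (Jmul n p.1 q.1) (Jmul n p.1 p.1)) : (Fin (n + 1) → F) × V) =
      (Jmul n p.1 (Jmul n q.1 (Jmul n p.1 p.1)),
        θ p.1 (Jmul n q.1 (Jmul n p.1 p.1)))) := by
  have key : ∀ x y : Fin (n + 1) → F,
      θ (Jmul n x y) (Jmul n x x) = θ x (Jmul n y (Jmul n x x)) := by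
    intro x y
    simp only [Jmul_eq hchar, Pi.add_apply, Pi.smul_apply, smul_eq_mul,
      map_add, map_smul, LinearMap.add_apply, LinearMap.smul_apply]
    rw [hsymm y x]
    module
  have key2 : ∀ x y : Fin (n + 1) → F,
      Jmul n (Jmul n x y) (Jmul n x x) = Jmul n x (Jmul n y (Jmul n x x)) := by
    intro x y
    simp only [Jmul_eq hchar, Pi.add_apply, Pi.smul_apply, smul_eq_mul]
    module
  exact ⟨key, fun p q => Prod.ext (key2 p.1 q.1) (key p.1 q.1)⟩
end

section
/- Let F be a field of characteristic not 2 and J_n the algebra with basis {e, n_1, …, n_{n−1}}, products e² = e, e n_i = (1/2) n_i, all other products zero. Then every idempotent of J_n is of the form e + Σ α_i n_i for scalars α_i, and for every such idempotent a, the 0-eigenspace of left multiplication by a on J_n is zero. -/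
lemma idem_zero {F : Type*} [Field F] (hchar : (2 : F) ≠ 0) (n : ℕ)
    (a : Fin (n + 1) → F) (ha : Jmul n a a = a) (ha0 : a ≠ 0) : a 0 = 1 := by
  have h0 : a 0 * a 0 = a 0 := by
    have := congrFun ha 0
    simpa [Jmul] using this
  have : a 0 * (a 0 - 1) = 0 := by ring_nf; linear_combination h0
  rcases mul_eq_zero.mp this with h | h
  · exfalso
    apply ha0
    funext i
    by_cases hi : i = 0
    · simp [hi, h]
    · have := congrFun ha i
      simp only [Jmul, if_neg hi, h] at this
      -- this : 2⁻¹ * (0 * a i + a i * 0) = a i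
      simpa using this.symm
  · exact sub_eq_zero.mp h

/-- over a field of characteristic not 2, every nonzero
idempotent of `J_n` has the form `e + Σ αᵢ nᵢ` (i.e. its `e`-coordinate is 1),
and for every such idempotent `a`, the 0-eigenspace of `L_a` is zero. -/
theorem stmt_16 {F : Type*} [Field F] (hchar : (2 : F) ≠ 0) (n : ℕ) :
    (∀ a : Fin (n + 1) → F, Jmul n a a = a → a ≠ 0 → a 0 = 1) ∧
    (∀ a : Fin (n + 1) → F, Jmul n a a = a → a ≠ 0 →
      ∀ y : Fin (n + 1) → F, Jmul n a y = 0 → y = 0) := by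
  refine ⟨fun a ha ha0 => idem_zero hchar n a ha ha0, fun a ha ha0 y hy => ?_⟩
  have h1 : a 0 = 1 := idem_zero hchar n a ha ha0
  have hy0 : y 0 = 0 := by
    have := congrFun hy 0
    simpa [Jmul, h1] using this
  funext i
  by_cases hi : i = 0
  · simp [hi, hy0]
  · have := congrFun hy i
    simp only [Jmul, if_neg hi, h1, hy0, one_mul, mul_zero, add_zero, Pi.zero_apply] at this
    rcases mul_eq_zero.mp this with h | h
    · exact absurd (inv_eq_zero.mp h) hchar
    · exact h
end
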